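/- For i ∈ ℝ^N with |i| ≥ 2ε, ε > 0, and any unit vector e ∈ ℝ^N, one has |i + εe| ≤ |i| + ε (i·e)/|i| + ε²/(2(|i| − ε)). -/

import Mathlib

open scoped RealInnerProductSpace

theorem stmt6 (N : ℕ) (ε : ℝ) (hε : 0 < ε)
    (i e : EuclideanSpace ℝ (Fin N)) (hi : 2 * ε ≤ ‖i‖) (he : ‖e‖ = 1) :
    ‖i + ε • e‖ ≤ ‖i‖ + ε * ⟪i, e⟫ / ‖i‖ + ε ^ 2 / (2 * (‖i‖ - ε)) := by
  set R := ‖i‖ with hR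
  set t := ⟪i, e⟫ with ht
  have hRpos : 0 < R := by linarith
  have hRe : 0 < R - ε := by linarith
  have htle : |t| ≤ R := by
    have := abs_real_inner_le_norm i e
    simpa [he] using this
  set s : ℝ := ε * t / R with hs
  set q : ℝ := ε ^ 2 / (2 * (R - ε)) with hq
  have hqpos : 0 < q := by positivity
  have hq2 : 2 * (R - ε) * q = ε ^ 2 := by
    rw [hq]; field_simp [hRe.ne']
  have hsabs : |s| ≤ ε := by
    rw [hs, abs_div, abs_of_pos hRpos, div_le_iff₀ hRpos, abs_mul, abs_of_pos hε]
    nlinarith [abs_nonneg t]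
  have hsge : -ε ≤ s := (abs_le.mp hsabs).1
  have hRs : R * s = ε * t := by
    rw [hs]; field_simp [hRpos.ne']
  have hnorm2 : ‖i + ε • e‖ ^ 2 = R ^ 2 + 2 * ε * t + ε ^ 2 := by
    rw [norm_add_sq_real, real_inner_smul_right, norm_smul]
    simp [he, abs_of_pos hε, ← ht, ← hR]
    ring
  have hRHSpos : 0 ≤ R + s + q := by nlinarith
  have key : ‖i + ε • e‖ ^ 2 ≤ (R + s + q) ^ 2 := by
    rw [hnorm2]
    nlinarith [sq_nonneg (s + q), hq2, hRs, hsge, hqpos.le]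
  have : ‖i + ε • e‖ ≤ R + s + q := by
    nlinarith [norm_nonneg (i + ε • e)]
  calc ‖i + ε • e‖ ≤ R + s + q := this
    _ = R + ε * t / R + ε ^ 2 / (2 * (R - ε)) := by rw [hs, hq]
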